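/- Let M be an S×F real matrix with nonnegative entries, each row summing to 1, and no zero column, with Z = diag(1ᵀM). Let R⁺ ∈ ℝ^F have all positive entries, define the diagonal matrix Z^R with entries Z^R_f = Z_f / R⁺_f, and Σ^R = M (Z^R)^{-1} Mᵀ, assumed invertible. Then Σ^R · 1 = M R⁺ (where 1 is the all-ones vector in ℝ^S). Consequently, if v = M R⁺ (the on-policy case v = V^{π_e}_{S,h}), then (Σ^R)^{-1} v = 1, so the L∞ outcome coverage assumption holds with constant 1, and the constructed vector x = (Z^R)^{-1} Mᵀ (Σ^R)^{-1} v equals R⁺ exactly. -/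

import Mathlib

open Matrix

/-- The reward-reweighted outcome covariance matrix `Σ^R = M (Z^R)⁻¹ Mᵀ`, where
`Z^R_f = Z_f / R⁺_f` and `Z_f = Σ_s M s f` is the `f`-th column sum. -/
noncomputable def SigmaR {S F : Type} [Fintype S] [Fintype F] [DecidableEq F]
    (M : Matrix S F ℝ) (R : F → ℝ) : Matrix S S ℝ :=
  M * Matrix.diagonal (fun f => ((∑ s, M s f) / R f)⁻¹) * Mᵀ

/-- on-policy case of the L∞ outcome coverage: `Σ^R 1 = M R⁺`; consequently, if
`v = M R⁺` then `(Σ^R)⁻¹ v = 1` (so L∞ outcome coverage holds with constant `1`) and the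
constructed vector `x = (Z^R)⁻¹ Mᵀ (Σ^R)⁻¹ v` equals `R⁺` exactly. -/
theorem stmt9 (S F : Type) [Fintype S] [Fintype F] [DecidableEq S] [DecidableEq F]
    (M : Matrix S F ℝ)
    (hnn : ∀ s f, 0 ≤ M s f)
    (hrow : ∀ s, ∑ f, M s f = 1)
    (hcol : ∀ f, ∃ s, M s f ≠ 0)
    (R : F → ℝ) (hR : ∀ f, 0 < R f)
    (hdet : IsUnit (SigmaR M R).det) :
    (SigmaR M R).mulVec (fun _ => 1) = M.mulVec R ∧
    ∀ v : S → ℝ, v = M.mulVec R →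
      ((SigmaR M R)⁻¹).mulVec v = (fun _ => 1) ∧
      (∀ s, |(((SigmaR M R)⁻¹).mulVec v) s| ≤ 1) ∧
      (Matrix.diagonal (fun f => ((∑ s, M s f) / R f)⁻¹) * Mᵀ *
        (SigmaR M R)⁻¹).mulVec v = R := by
  -- column sums are positive
  have hZ : ∀ f, 0 < ∑ s, M s f := by
    intro f
    obtain ⟨s, hs⟩ := hcol f
    have : 0 < M s f := lt_of_le_of_ne (hnn s f) (Ne.symm hs)
    exact Finset.sum_pos' (fun i _ => hnn i f) ⟨s, Finset.mem_univ s, this⟩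
  -- key: Mᵀ 1 = column sums
  have hMt : Mᵀ.mulVec (fun _ => 1) = fun f => ∑ s, M s f := by
    funext f
    simp [Matrix.mulVec, dotProduct, Matrix.transpose_apply]
  -- key: (Z^R)⁻¹ Mᵀ 1 = R
  have hDZ : (Matrix.diagonal (fun f => ((∑ s, M s f) / R f)⁻¹)).mulVec
      (Mᵀ.mulVec (fun _ => 1)) = R := by
    rw [hMt]
    funext f
    rw [Matrix.mulVec_diagonal]
    field_simp
    exact mul_div_cancel_left₀ (R f) (hZ f).ne'
  have h1 : (SigmaR M R).mulVec (fun _ => 1) = M.mulVec R := by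
    rw [SigmaR, ← Matrix.mulVec_mulVec, ← Matrix.mulVec_mulVec, hDZ]
  refine ⟨h1, fun v hv => ?_⟩
  have hinv : ((SigmaR M R)⁻¹).mulVec v = (fun _ => 1) := by
    rw [hv, ← h1, Matrix.mulVec_mulVec, Matrix.nonsing_inv_mul _ hdet, Matrix.one_mulVec]
  refine ⟨hinv, fun s => by rw [hinv]; simp, ?_⟩
  rw [← Matrix.mulVec_mulVec, hinv, ← Matrix.mulVec_mulVec, hDZ]
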